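/- Define S₀(t,ξ) = (πσ√α)^{−1}·e^{2πiξ₀t}·e^{−(ξ₀−ξ)²/α} and S₁(t,ξ) = a·(πσ√α)^{−1}·e^{2πiξ₁t}·e^{−(ξ₁−ξ)²/α}. Then for fixed σ > 0, α > 0 and ξ₀ < ξ₁: (i) there exist constants C > 0 and a₀ > 0 such that for every 0 < a ≤ a₀ and all (t,ξ) ∈ ℝ², |S_V(α; t, ξ) − S₀(t,ξ)| ≤ C·a; (ii) there exist constants C′ > 0 and a₁ > 0 such that for every a ≥ a₁ and all (t,ξ) ∈ ℝ², |a^{−1}·S_V(α; t, ξ) − a^{−1}·S₁(t,ξ)| ≤ C′/a. -/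

import Mathlib

noncomputable section

open MeasureTheory
open scoped Classical

/-- The closed-form STFT of the two-component harmonic signal. -/
def Vst (ξ₀ ξ₁ a σ t η : ℝ) : ℂ :=
  Complex.exp (2 * Real.pi * Complex.I * ξ₀ * t) *
    ((Real.exp (-(Real.pi ^ 2 * σ ^ 2 * (η - ξ₀) ^ 2)) : ℂ) +
      (a : ℂ) * Complex.exp (2 * Real.pi * Complex.I * (ξ₁ - ξ₀) * t) *
        (Real.exp (-(Real.pi ^ 2 * σ ^ 2 * (η - ξ₁) ^ 2)) : ℂ))

/-- `q(t,η) = a·e^{2πiΔt}·e^{2π²σ²Δ(η−ξ̄)}`. -/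
def qFac (ξ₀ ξ₁ a σ t η : ℝ) : ℂ :=
  (a : ℂ) * Complex.exp (2 * Real.pi * Complex.I * (ξ₁ - ξ₀) * t) *
    (Real.exp (2 * Real.pi ^ 2 * σ ^ 2 * (ξ₁ - ξ₀) * (η - (ξ₀ + ξ₁) / 2)) : ℂ)

/-- The synchrosqueezing reassignment rule `η̂_s(t,η) = (ξ₀ + ξ₁·q)/(1 + q)`. -/
def etaS (ξ₀ ξ₁ a σ t η : ℝ) : ℂ :=
  ((ξ₀ : ℂ) + (ξ₁ : ℂ) * qFac ξ₀ ξ₁ a σ t η) / (1 + qFac ξ₀ ξ₁ a σ t η)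

/-- The synchrosqueezing transform, with integrand 0 where `V(t,η) = 0`. -/
def SV (ξ₀ ξ₁ a σ α t ξ : ℝ) : ℂ :=
  ((Real.sqrt (Real.pi * α) : ℝ) : ℂ)⁻¹ *
    ∫ η : ℝ, if Vst ξ₀ ξ₁ a σ t η = 0 then 0 else
      Vst ξ₀ ξ₁ a σ t η *
        ((Real.exp (-(‖etaS ξ₀ ξ₁ a σ t η - (ξ : ℂ)‖ ^ 2 / α)) : ℝ) : ℂ)

/-- The synchrosqueezing transform of a single component `e^{2πiξjx}`. -/
def Ssingle (ξj σ α t ξ : ℝ) : ℂ :=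
  ((Real.pi * σ * Real.sqrt α : ℝ) : ℂ)⁻¹ * Complex.exp (2 * Real.pi * Complex.I * ξj * t) *
    ((Real.exp (-((ξj - ξ) ^ 2 / α)) : ℝ) : ℂ)


namespace Stmt17Aux2

/-- abstract estimate for part (i) -/
lemma estA_abs (α Δ a E ex ey : ℝ) (hα : 0 < α) (hΔ : 0 < Δ) (ha : 0 < a) (hE : 0 < E)
    (hex0 : 0 ≤ ex) (hex1 : ex ≤ 1) (hey0 : 0 ≤ ey) (hey1 : ey ≤ 1)
    (q : ℂ) (hq : ‖q‖ = a * E) (h1q : 1 + q ≠ 0)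
    (hl : |ex - ey| ≤ 2 / Real.sqrt α * (Δ * ‖q‖ / ‖1 + q‖)) :
    ‖(1 + q) * ((ex : ℝ) : ℂ) - ((ey : ℝ) : ℂ)‖ ≤ a * (5 + 6 * Δ / Real.sqrt α) * E := by
  have hsα : 0 < Real.sqrt α := Real.sqrt_pos.mpr hα
  have hq0 : 0 ≤ ‖q‖ := norm_nonneg _
  have hd : 0 < ‖1 + q‖ := norm_pos_iff.mpr h1q
  have hnormsub : ‖((ex : ℂ)) - ((ey : ℂ))‖ = |ex - ey| := by
    rw [← Complex.ofReal_sub, Complex.norm_real, Real.norm_eq_abs]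
  have hney : ‖((ey : ℂ))‖ = ey := by
    rw [Complex.norm_real, Real.norm_eq_abs, abs_of_nonneg hey0]
  have hnex : ‖((ex : ℂ))‖ = ex := by
    rw [Complex.norm_real, Real.norm_eq_abs, abs_of_nonneg hex0]
  have h1qle : ‖1 + q‖ ≤ 1 + ‖q‖ := by
    calc ‖1 + q‖ ≤ ‖(1 : ℂ)‖ + ‖q‖ := norm_add_le _ _
      _ = 1 + ‖q‖ := by rw [norm_one]
  have hd6 : 0 ≤ 6 * Δ / Real.sqrt α := by positivity
  rcases le_or_gt ‖q‖ (1 / 2) with hsmall | hbig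
  · -- small q
    have hden : 1 / 2 ≤ ‖1 + q‖ := by
      have h1 : ‖(1 : ℂ)‖ ≤ ‖1 + q‖ + ‖q‖ := by
        calc ‖(1 : ℂ)‖ = ‖(1 + q) - q‖ := by ring_nf
          _ ≤ ‖1 + q‖ + ‖q‖ := norm_sub_le _ _
      rw [norm_one] at h1; linarith
    have hl2 : |ex - ey| ≤ 2 / Real.sqrt α * (2 * Δ * ‖q‖) := by
      refine le_trans hl ?_
      apply mul_le_mul_of_nonneg_left ?_ (by positivity)
      rw [div_le_iff₀ hd]
      nlinarith [mul_le_mul_of_nonneg_left hden (show (0:ℝ) ≤ 2 * Δ * ‖q‖ by positivity)]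
    have hdecomp : (1 + q) * ((ex : ℂ)) - ((ey : ℂ)) =
        (1 + q) * (((ex : ℂ)) - ((ey : ℂ))) + q * ((ey : ℂ)) := by ring
    rw [hdecomp]
    calc ‖(1 + q) * (((ex : ℂ)) - ((ey : ℂ))) + q * ((ey : ℂ))‖
        ≤ ‖(1 + q) * (((ex : ℂ)) - ((ey : ℂ)))‖ + ‖q * ((ey : ℂ))‖ := norm_add_le _ _
      _ = ‖1 + q‖ * |ex - ey| + ‖q‖ * ey := by rw [norm_mul, norm_mul, hnormsub, hney]
      _ ≤ (3 / 2) * (2 / Real.sqrt α * (2 * Δ * ‖q‖)) + ‖q‖ * 1 := by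
          have h32 : ‖1 + q‖ ≤ 3 / 2 := by linarith
          have habs : 0 ≤ |ex - ey| := abs_nonneg _
          have hy : ‖q‖ * ey ≤ ‖q‖ * 1 := mul_le_mul_of_nonneg_left hey1 hq0
          nlinarith [mul_le_mul h32 hl2 habs (by norm_num : (0:ℝ) ≤ 3/2)]
      _ = ‖q‖ * (6 * Δ / Real.sqrt α + 1) := by field_simp; ring
      _ ≤ a * (5 + 6 * Δ / Real.sqrt α) * E := by
          rw [hq]
          nlinarith [mul_pos ha hE, mul_nonneg (mul_nonneg ha.le hE.le) hd6]
  · -- big q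
    calc ‖(1 + q) * ((ex : ℂ)) - ((ey : ℂ))‖
        ≤ ‖(1 + q) * ((ex : ℂ))‖ + ‖((ey : ℂ))‖ := norm_sub_le _ _
      _ = ‖1 + q‖ * ex + ey := by rw [norm_mul, hnex, hney]
      _ ≤ (1 + ‖q‖) * 1 + 1 := by
          have := mul_le_mul h1qle hex1 hex0 (by linarith)
          linarith
      _ ≤ 5 * ‖q‖ := by linarith
      _ ≤ a * (5 + 6 * Δ / Real.sqrt α) * E := by
          rw [hq]
          nlinarith [mul_pos ha hE, mul_nonneg (mul_nonneg ha.le hE.le) hd6]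

/-- abstract estimate for part (ii) -/
lemma estB_abs (α Δ a E e0 ex ey : ℝ) (hα : 0 < α) (hΔ : 0 < Δ) (ha : 0 < a) (hE : 0 < E)
    (he0 : 0 < e0) (hex0 : 0 ≤ ex) (hex1 : ex ≤ 1) (hey0 : 0 ≤ ey) (hey1 : ey ≤ 1)
    (q P0 P1 : ℂ) (hq : ‖q‖ = a * E) (hP0 : ‖P0‖ = 1) (hP1 : ‖P1‖ = 1)
    (hrel : P0 * q = (a : ℂ) * P1 * ((E : ℝ) : ℂ)) (h1q : 1 + q ≠ 0)
    (hl : |ex - ey| ≤ 2 / Real.sqrt α * (Δ / ‖1 + q‖)) :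
    ‖(a : ℂ)⁻¹ * (P0 * ((e0 : ℝ) : ℂ) * (1 + q) * ((ex : ℝ) : ℂ)) -
        P1 * ((e0 * E : ℝ) : ℂ) * ((ey : ℝ) : ℂ)‖ ≤
      a⁻¹ * (5 + 6 * Δ / Real.sqrt α) * e0 := by
  have hsα : 0 < Real.sqrt α := Real.sqrt_pos.mpr hα
  have hq0 : 0 ≤ ‖q‖ := norm_nonneg _
  have hd : 0 < ‖1 + q‖ := norm_pos_iff.mpr h1q
  have hane : (a : ℂ) ≠ 0 := by exact_mod_cast ha.ne'
  have hnormsub : ‖((ex : ℂ)) - ((ey : ℂ))‖ = |ex - ey| := by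
    rw [← Complex.ofReal_sub, Complex.norm_real, Real.norm_eq_abs]
  have hney : ‖((ey : ℂ))‖ = ey := by
    rw [Complex.norm_real, Real.norm_eq_abs, abs_of_nonneg hey0]
  have hnex : ‖((ex : ℂ))‖ = ex := by
    rw [Complex.norm_real, Real.norm_eq_abs, abs_of_nonneg hex0]
  have hne0 : ‖((e0 : ℝ) : ℂ)‖ = e0 := by
    rw [Complex.norm_real, Real.norm_eq_abs, abs_of_pos he0]
  have hne0E : ‖((e0 * E : ℝ) : ℂ)‖ = e0 * E := by
    rw [Complex.norm_real, Real.norm_eq_abs, abs_of_pos (by positivity)]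
  have hna : ‖((a : ℝ) : ℂ)⁻¹‖ = a⁻¹ := by
    rw [norm_inv, Complex.norm_real, Real.norm_eq_abs, abs_of_pos ha]
  have hd0 : 0 ≤ Δ / Real.sqrt α := by positivity
  rcases le_or_gt 2 ‖q‖ with hbig | hsmall
  · -- big q
    have hdecomp : (a : ℂ)⁻¹ * (P0 * ((e0 : ℝ) : ℂ) * (1 + q) * ((ex : ℂ))) -
        P1 * ((e0 * E : ℝ) : ℂ) * ((ey : ℂ)) =
        (a : ℂ)⁻¹ * P0 * ((e0 : ℝ) : ℂ) * ((ex : ℂ)) +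
          P1 * ((e0 * E : ℝ) : ℂ) * (((ex : ℂ)) - ((ey : ℂ))) := by
      field_simp
      push_cast
      linear_combination ((e0 : ℂ)) * ((ex : ℂ)) * hrel
    rw [hdecomp]
    have hden : ‖q‖ - 1 ≤ ‖1 + q‖ := by
      have h1 : ‖q‖ ≤ ‖1 + q‖ + ‖(1 : ℂ)‖ := by
        calc ‖q‖ = ‖(1 + q) - 1‖ := by ring_nf
          _ ≤ ‖1 + q‖ + ‖(1 : ℂ)‖ := norm_sub_le _ _
      rw [norm_one] at h1; linarith
    have hl2 : |ex - ey| ≤ 2 / Real.sqrt α * (2 * Δ / ‖q‖) := by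
      refine le_trans hl ?_
      apply mul_le_mul_of_nonneg_left ?_ (by positivity)
      rw [div_le_div_iff₀ hd (by linarith)]
      have hhalf : ‖q‖ / 2 ≤ ‖1 + q‖ := by linarith
      nlinarith [mul_le_mul_of_nonneg_left hhalf hΔ.le]
    calc ‖(a : ℂ)⁻¹ * P0 * ((e0 : ℝ) : ℂ) * ((ex : ℂ)) +
          P1 * ((e0 * E : ℝ) : ℂ) * (((ex : ℂ)) - ((ey : ℂ)))‖
        ≤ ‖(a : ℂ)⁻¹ * P0 * ((e0 : ℝ) : ℂ) * ((ex : ℂ))‖ +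
          ‖P1 * ((e0 * E : ℝ) : ℂ) * (((ex : ℂ)) - ((ey : ℂ)))‖ := norm_add_le _ _
      _ = a⁻¹ * e0 * ex + (e0 * E) * |ex - ey| := by
          simp only [norm_mul]
          rw [hna, hP0, hP1, hne0, hne0E, hnex, hnormsub]; ring
      _ ≤ a⁻¹ * e0 * 1 + (e0 * E) * (2 / Real.sqrt α * (2 * Δ / ‖q‖)) := by
          have h1 : a⁻¹ * e0 * ex ≤ a⁻¹ * e0 * 1 := by
            apply mul_le_mul_of_nonneg_left hex1 (by positivity)
          have h2 : (e0 * E) * |ex - ey| ≤ (e0 * E) * (2 / Real.sqrt α * (2 * Δ / ‖q‖)) := by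
            apply mul_le_mul_of_nonneg_left hl2 (by positivity)
          linarith
      _ = a⁻¹ * e0 + a⁻¹ * (4 * (Δ / Real.sqrt α)) * e0 := by
          rw [hq]; field_simp; ring
      _ ≤ a⁻¹ * (5 + 6 * Δ / Real.sqrt α) * e0 := by
          have h2 : 6 * Δ / Real.sqrt α = 6 * (Δ / Real.sqrt α) := by ring
          rw [h2]
          nlinarith [mul_nonneg (mul_nonneg (inv_nonneg.mpr ha.le) hd0) he0.le,
            mul_nonneg (inv_nonneg.mpr ha.le) he0.le]
  · -- small q
    calc ‖(a : ℂ)⁻¹ * (P0 * ((e0 : ℝ) : ℂ) * (1 + q) * ((ex : ℂ))) -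
          P1 * ((e0 * E : ℝ) : ℂ) * ((ey : ℂ))‖
        ≤ ‖(a : ℂ)⁻¹ * (P0 * ((e0 : ℝ) : ℂ) * (1 + q) * ((ex : ℂ)))‖ +
          ‖P1 * ((e0 * E : ℝ) : ℂ) * ((ey : ℂ))‖ := norm_sub_le _ _
      _ = a⁻¹ * (e0 * ‖1 + q‖ * ex) + (e0 * E) * ey := by
          simp only [norm_mul]
          rw [hna, hP0, hP1, hne0, hne0E, hnex, hney]; ring
      _ ≤ a⁻¹ * (e0 * 3 * 1) + (e0 * E) * 1 := by
          have h1q3 : ‖1 + q‖ ≤ 3 := by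
            have := norm_add_le (1 : ℂ) q
            rw [norm_one] at this; linarith
          have h1 : e0 * ‖1 + q‖ * ex ≤ e0 * 3 * 1 := by
            have hh : ‖1 + q‖ * ex ≤ 3 * 1 := mul_le_mul h1q3 hex1 hex0 (by norm_num)
            calc e0 * ‖1 + q‖ * ex = e0 * (‖1 + q‖ * ex) := by ring
              _ ≤ e0 * (3 * 1) := mul_le_mul_of_nonneg_left hh he0.le
              _ = e0 * 3 * 1 := by ring
          have h2 : (e0 * E) * ey ≤ (e0 * E) * 1 := by
            apply mul_le_mul_of_nonneg_left hey1 (by positivity)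
          have h3 : 0 ≤ a⁻¹ := by positivity
          linarith [mul_le_mul_of_nonneg_left h1 h3, h2]
      _ ≤ a⁻¹ * (5 + 6 * Δ / Real.sqrt α) * e0 := by
          have haE : a * E < 2 := by rw [← hq]; exact hsmall
          have hE2 : E ≤ a⁻¹ * 2 := by
            calc E = a⁻¹ * (a * E) := by field_simp
              _ ≤ a⁻¹ * 2 := mul_le_mul_of_nonneg_left haE.le (by positivity)
          have h2 : 6 * Δ / Real.sqrt α = 6 * (Δ / Real.sqrt α) := by ring
          rw [h2]
          nlinarith [mul_nonneg (mul_nonneg (inv_nonneg.mpr ha.le) hd0) he0.le,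
            mul_le_mul_of_nonneg_left hE2 he0.le]

end Stmt17Aux2

namespace Stmt17Aux

lemma exp_neg_le_one (r : ℝ) (hr : 0 ≤ r) : Real.exp (-r) ≤ 1 := by
  rw [← Real.exp_zero]; exact Real.exp_le_exp.mpr (by linarith)

lemma abs_mul_exp_le (α : ℝ) (hα : 0 < α) (u : ℝ) :
    |u| * Real.exp (-(u ^ 2 / α)) ≤ Real.sqrt α := by
  have hs : 0 < Real.sqrt α := Real.sqrt_pos.mpr hα
  have hs2 : Real.sqrt α ^ 2 = α := Real.sq_sqrt hα.le
  have h1 : u ^ 2 / α + 1 ≤ Real.exp (u ^ 2 / α) := by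
    have := Real.add_one_le_exp (u ^ 2 / α); linarith
  have h3 : 0 < Real.exp (u ^ 2 / α) := Real.exp_pos _
  rw [Real.exp_neg, mul_inv_le_iff₀ h3]
  have hkey : Real.sqrt α * |u| ≤ u ^ 2 + α := by
    nlinarith [sq_nonneg (|u| - Real.sqrt α), sq_abs u]
  have h4 : |u| ≤ Real.sqrt α * (u ^ 2 / α + 1) := by
    have h5 : u ^ 2 / α + 1 = (u ^ 2 + α) / α := by field_simp
    rw [h5, mul_div_assoc', le_div_iff₀ hα]
    nlinarith [mul_le_mul_of_nonneg_left hkey hs.le]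
  calc |u| ≤ Real.sqrt α * (u ^ 2 / α + 1) := h4
    _ ≤ Real.sqrt α * Real.exp (u ^ 2 / α) := by nlinarith

lemma exp_sq_lipschitz (α : ℝ) (hα : 0 < α) (x y : ℝ) :
    |Real.exp (-(x ^ 2 / α)) - Real.exp (-(y ^ 2 / α))| ≤ 2 / Real.sqrt α * |x - y| := by
  have hs : 0 < Real.sqrt α := Real.sqrt_pos.mpr hα
  have key : ∀ u : ℝ, HasDerivAt (fun u : ℝ => Real.exp (-(u ^ 2 / α)))
      (Real.exp (-(u ^ 2 / α)) * (-(2 * u / α))) u := by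
    intro u
    have h1 : HasDerivAt (fun u : ℝ => -(u ^ 2 / α)) (-(2 * u / α)) u := by
      have := ((hasDerivAt_pow 2 u).div_const α).neg
      exact (by simpa using this : HasDerivAt (-fun x : ℝ => x ^ 2 / α) (-(2 * u / α)) u)
    exact h1.exp
  have hb : ∀ u : ℝ, ‖Real.exp (-(u ^ 2 / α)) * (-(2 * u / α))‖ ≤ 2 / Real.sqrt α := by
    intro u
    have h0 := abs_mul_exp_le α hα u
    have he : 0 < Real.exp (-(u ^ 2 / α)) := Real.exp_pos _
    have hss : Real.sqrt α * Real.sqrt α = α := Real.mul_self_sqrt hα.le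
    rw [Real.norm_eq_abs, abs_mul, abs_of_pos he, abs_neg, abs_div, abs_mul]
    rw [abs_of_pos hα, abs_of_pos (by norm_num : (0:ℝ) < 2)]
    have heq : Real.exp (-(u ^ 2 / α)) * (2 * |u| / α) =
        2 / α * (|u| * Real.exp (-(u ^ 2 / α))) := by ring
    rw [heq]
    calc 2 / α * (|u| * Real.exp (-(u ^ 2 / α)))
        ≤ 2 / α * Real.sqrt α := by
          apply mul_le_mul_of_nonneg_left h0 (by positivity)
      _ = 2 / Real.sqrt α := by
          rw [div_mul_eq_mul_div, div_eq_div_iff hα.ne' hs.ne', mul_assoc, hss]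
  have := Convex.norm_image_sub_le_of_norm_hasDerivWithin_le
    (f := fun u : ℝ => Real.exp (-(u ^ 2 / α)))
    (f' := fun u : ℝ => Real.exp (-(u ^ 2 / α)) * (-(2 * u / α)))
    (fun u _ => (key u).hasDerivWithinAt) (fun u _ => hb u) convex_univ
    (Set.mem_univ y) (Set.mem_univ x)
  simpa [Real.norm_eq_abs] using this

lemma gauss_integrable (b c : ℝ) (hb : 0 < b) :
    Integrable (fun η : ℝ => Real.exp (-(b * (η - c) ^ 2))) := by
  have h := (integrable_exp_neg_mul_sq hb).comp_sub_right c
  simpa [neg_mul] using h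

lemma gauss_integral (b c : ℝ) (hb : 0 < b) :
    ∫ η : ℝ, Real.exp (-(b * (η - c) ^ 2)) = Real.sqrt (Real.pi / b) := by
  rw [← integral_gaussian b, ← integral_sub_right_eq_self (fun x => Real.exp (-b * x ^ 2)) c]
  simp [neg_mul]

lemma exp_arg_id (ξ₀ ξ₁ σ η : ℝ) :
    Real.exp (-(Real.pi ^ 2 * σ ^ 2 * (η - ξ₁) ^ 2)) =
      Real.exp (-(Real.pi ^ 2 * σ ^ 2 * (η - ξ₀) ^ 2)) *
        Real.exp (2 * Real.pi ^ 2 * σ ^ 2 * (ξ₁ - ξ₀) * (η - (ξ₀ + ξ₁) / 2)) := by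
  rw [← Real.exp_add]; congr 1; ring

lemma Vst_eq (ξ₀ ξ₁ a σ t η : ℝ) :
    Vst ξ₀ ξ₁ a σ t η = Complex.exp (2 * Real.pi * Complex.I * ξ₀ * t) *
      ((Real.exp (-(Real.pi ^ 2 * σ ^ 2 * (η - ξ₀) ^ 2)) : ℝ) : ℂ) *
        (1 + qFac ξ₀ ξ₁ a σ t η) := by
  unfold Vst qFac
  rw [exp_arg_id ξ₀ ξ₁ σ η]
  push_cast
  ring

lemma expI_mul (ξ₀ ξ₁ t : ℝ) :
    Complex.exp (2 * Real.pi * Complex.I * ξ₀ * t) *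
      Complex.exp (2 * Real.pi * Complex.I * (ξ₁ - ξ₀) * t) =
        Complex.exp (2 * Real.pi * Complex.I * ξ₁ * t) := by
  rw [← Complex.exp_add]; congr 1; push_cast; ring

lemma norm_exp_re_zero (z : ℂ) (hz : z.re = 0) : ‖Complex.exp z‖ = 1 := by
  rw [Complex.norm_exp, hz, Real.exp_zero]

lemma norm_expI (c t : ℝ) : ‖Complex.exp (2 * Real.pi * Complex.I * c * t)‖ = 1 := by
  apply norm_exp_re_zero
  simp [Complex.mul_re, Complex.mul_im]

lemma norm_expI' (ξ₀ ξ₁ t : ℝ) :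
    ‖Complex.exp (2 * Real.pi * Complex.I * ((ξ₁ : ℂ) - (ξ₀ : ℂ)) * t)‖ = 1 := by
  apply norm_exp_re_zero
  simp [Complex.mul_re, Complex.mul_im]

lemma norm_qFac (ξ₀ ξ₁ σ : ℝ) (a : ℝ) (ha : 0 ≤ a) (t η : ℝ) :
    ‖qFac ξ₀ ξ₁ a σ t η‖ =
      a * Real.exp (2 * Real.pi ^ 2 * σ ^ 2 * (ξ₁ - ξ₀) * (η - (ξ₀ + ξ₁) / 2)) := by
  unfold qFac
  rw [norm_mul, norm_mul, norm_expI' ξ₀ ξ₁ t, Complex.norm_real, Complex.norm_real,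
    Real.norm_eq_abs, Real.norm_eq_abs, abs_of_nonneg ha,
    abs_of_pos (Real.exp_pos _), mul_one]

lemma Vst_eq_zero_iff (ξ₀ ξ₁ a σ t η : ℝ) :
    Vst ξ₀ ξ₁ a σ t η = 0 ↔ 1 + qFac ξ₀ ξ₁ a σ t η = 0 := by
  rw [Vst_eq]
  constructor
  · intro h
    rcases mul_eq_zero.mp h with h | h
    · rcases mul_eq_zero.mp h with h | h
      · exact absurd h (Complex.exp_ne_zero _)
      · exact absurd h (by exact_mod_cast Real.exp_ne_zero _)
    · exact h
  · intro h; rw [h, mul_zero]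

lemma etaS_sub₀ (ξ₀ ξ₁ a σ t η : ℝ) (h : 1 + qFac ξ₀ ξ₁ a σ t η ≠ 0) :
    etaS ξ₀ ξ₁ a σ t η - ξ₀ =
      ((ξ₁ : ℂ) - ξ₀) * qFac ξ₀ ξ₁ a σ t η / (1 + qFac ξ₀ ξ₁ a σ t η) := by
  unfold etaS; field_simp; ring

lemma etaS_sub₁ (ξ₀ ξ₁ a σ t η : ℝ) (h : 1 + qFac ξ₀ ξ₁ a σ t η ≠ 0) :
    etaS ξ₀ ξ₁ a σ t η - ξ₁ = -(((ξ₁ : ℂ) - ξ₀)) / (1 + qFac ξ₀ ξ₁ a σ t η) := by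
  unfold etaS; field_simp; ring

end Stmt17Aux

namespace Stmt17Aux
lemma norm_le_norm_sub_add' (x y : ℂ) : ‖x‖ ≤ ‖x - y‖ + ‖y‖ := by
  simpa using norm_add_le (x - y) y
end Stmt17Aux

namespace Stmt17Aux

/-- Pointwise estimate for part (i). -/
lemma keyA (ξ₀ ξ₁ σ α : ℝ) (hξ : ξ₀ < ξ₁) (hα : 0 < α)
    (a : ℝ) (ha : 0 < a) (t ξ η : ℝ) :
    ‖(if Vst ξ₀ ξ₁ a σ t η = 0 then (0 : ℂ) else
        Vst ξ₀ ξ₁ a σ t η *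
          ((Real.exp (-(‖etaS ξ₀ ξ₁ a σ t η - (ξ : ℂ)‖ ^ 2 / α)) : ℝ) : ℂ)) -
      Complex.exp (2 * Real.pi * Complex.I * ξ₀ * t) *
        ((Real.exp (-(Real.pi ^ 2 * σ ^ 2 * (η - ξ₀) ^ 2)) : ℝ) : ℂ) *
        ((Real.exp (-((ξ₀ - ξ) ^ 2 / α)) : ℝ) : ℂ)‖ ≤
    a * (5 + 6 * (ξ₁ - ξ₀) / Real.sqrt α) *
      Real.exp (-(Real.pi ^ 2 * σ ^ 2 * (η - ξ₁) ^ 2)) := by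
  have hΔ : 0 < ξ₁ - ξ₀ := sub_pos.mpr hξ
  have hsα : 0 < Real.sqrt α := Real.sqrt_pos.mpr hα
  have he0pos : 0 < Real.exp (-(Real.pi ^ 2 * σ ^ 2 * (η - ξ₀) ^ 2)) := Real.exp_pos _
  have he1pos : 0 < Real.exp (-(Real.pi ^ 2 * σ ^ 2 * (η - ξ₁) ^ 2)) := Real.exp_pos _
  have hEpos : 0 < Real.exp (2 * Real.pi ^ 2 * σ ^ 2 * (ξ₁ - ξ₀) * (η - (ξ₀ + ξ₁) / 2)) :=
    Real.exp_pos _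
  have hqn := norm_qFac ξ₀ ξ₁ σ a ha.le t η
  have hid := (exp_arg_id ξ₀ ξ₁ σ η).symm
  have hM06 : 0 ≤ 6 * (ξ₁ - ξ₀) / Real.sqrt α := div_nonneg (by linarith) hsα.le
  have hs0le : Real.exp (-((ξ₀ - ξ) ^ 2 / α)) ≤ 1 := exp_neg_le_one _ (by positivity)
  by_cases hV0 : Vst ξ₀ ξ₁ a σ t η = 0
  · rw [if_pos hV0, zero_sub, norm_neg]
    have h1q : 1 + qFac ξ₀ ξ₁ a σ t η = 0 := (Vst_eq_zero_iff ξ₀ ξ₁ a σ t η).mp hV0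
    have hq1 : ‖qFac ξ₀ ξ₁ a σ t η‖ = 1 := by
      have hq : qFac ξ₀ ξ₁ a σ t η = -1 := by linear_combination h1q
      rw [hq, norm_neg, norm_one]
    have haE : a * Real.exp (2 * Real.pi ^ 2 * σ ^ 2 * (ξ₁ - ξ₀) * (η - (ξ₀ + ξ₁) / 2)) = 1 :=
      hqn.symm.trans hq1
    rw [norm_mul, norm_mul, norm_expI, one_mul, Complex.norm_real, Complex.norm_real,
      Real.norm_eq_abs, Real.norm_eq_abs, abs_of_pos he0pos, abs_of_pos (Real.exp_pos _)]
    have he0e1 : Real.exp (-(Real.pi ^ 2 * σ ^ 2 * (η - ξ₀) ^ 2)) =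
        a * Real.exp (-(Real.pi ^ 2 * σ ^ 2 * (η - ξ₁) ^ 2)) := by
      calc Real.exp (-(Real.pi ^ 2 * σ ^ 2 * (η - ξ₀) ^ 2))
          = Real.exp (-(Real.pi ^ 2 * σ ^ 2 * (η - ξ₀) ^ 2)) *
            (a * Real.exp (2 * Real.pi ^ 2 * σ ^ 2 * (ξ₁ - ξ₀) * (η - (ξ₀ + ξ₁) / 2))) := by
            rw [haE, mul_one]
        _ = a * (Real.exp (-(Real.pi ^ 2 * σ ^ 2 * (η - ξ₀) ^ 2)) *
            Real.exp (2 * Real.pi ^ 2 * σ ^ 2 * (ξ₁ - ξ₀) * (η - (ξ₀ + ξ₁) / 2))) := by ring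
        _ = a * Real.exp (-(Real.pi ^ 2 * σ ^ 2 * (η - ξ₁) ^ 2)) := by rw [hid]
    calc Real.exp (-(Real.pi ^ 2 * σ ^ 2 * (η - ξ₀) ^ 2)) * Real.exp (-((ξ₀ - ξ) ^ 2 / α))
        ≤ Real.exp (-(Real.pi ^ 2 * σ ^ 2 * (η - ξ₀) ^ 2)) * 1 :=
          mul_le_mul_of_nonneg_left hs0le he0pos.le
      _ = a * Real.exp (-(Real.pi ^ 2 * σ ^ 2 * (η - ξ₁) ^ 2)) := by rw [mul_one, he0e1]
      _ ≤ a * (5 + 6 * (ξ₁ - ξ₀) / Real.sqrt α) *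
            Real.exp (-(Real.pi ^ 2 * σ ^ 2 * (η - ξ₁) ^ 2)) := by
          nlinarith [mul_pos ha he1pos, mul_nonneg (mul_pos ha he1pos).le hM06]
  · have h1q : 1 + qFac ξ₀ ξ₁ a σ t η ≠ 0 :=
      fun h => hV0 ((Vst_eq_zero_iff ξ₀ ξ₁ a σ t η).mpr h)
    rw [if_neg hV0, Vst_eq]
    have hfactor : Complex.exp (2 * Real.pi * Complex.I * ξ₀ * t) *
          ((Real.exp (-(Real.pi ^ 2 * σ ^ 2 * (η - ξ₀) ^ 2)) : ℝ) : ℂ) *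
          (1 + qFac ξ₀ ξ₁ a σ t η) *
          ((Real.exp (-(‖etaS ξ₀ ξ₁ a σ t η - (ξ : ℂ)‖ ^ 2 / α)) : ℝ) : ℂ) -
        Complex.exp (2 * Real.pi * Complex.I * ξ₀ * t) *
          ((Real.exp (-(Real.pi ^ 2 * σ ^ 2 * (η - ξ₀) ^ 2)) : ℝ) : ℂ) *
          ((Real.exp (-((ξ₀ - ξ) ^ 2 / α)) : ℝ) : ℂ) =
        Complex.exp (2 * Real.pi * Complex.I * ξ₀ * t) *
          ((Real.exp (-(Real.pi ^ 2 * σ ^ 2 * (η - ξ₀) ^ 2)) : ℝ) : ℂ) *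
          ((1 + qFac ξ₀ ξ₁ a σ t η) *
              ((Real.exp (-(‖etaS ξ₀ ξ₁ a σ t η - (ξ : ℂ)‖ ^ 2 / α)) : ℝ) : ℂ) -
            ((Real.exp (-((ξ₀ - ξ) ^ 2 / α)) : ℝ) : ℂ)) := by ring
    rw [hfactor, norm_mul, norm_mul, norm_expI, one_mul, Complex.norm_real,
      Real.norm_eq_abs, abs_of_pos he0pos]
    -- derive the lipschitz hypothesis
    have hdn : 0 < ‖1 + qFac ξ₀ ξ₁ a σ t η‖ := norm_pos_iff.mpr h1q
    have hxy : abs (‖etaS ξ₀ ξ₁ a σ t η - (ξ : ℂ)‖ - abs (ξ₀ - ξ)) ≤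
        (ξ₁ - ξ₀) * ‖qFac ξ₀ ξ₁ a σ t η‖ / ‖1 + qFac ξ₀ ξ₁ a σ t η‖ := by
      have hy' : abs (ξ₀ - ξ) = ‖((ξ₀ : ℂ) - (ξ : ℂ))‖ := by
        rw [← Complex.ofReal_sub, Complex.norm_real, Real.norm_eq_abs]
      rw [hy']
      have h1 := abs_norm_sub_norm_le (etaS ξ₀ ξ₁ a σ t η - (ξ : ℂ)) ((ξ₀ : ℂ) - (ξ : ℂ))
      have h2 : etaS ξ₀ ξ₁ a σ t η - (ξ : ℂ) - ((ξ₀ : ℂ) - (ξ : ℂ)) =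
          etaS ξ₀ ξ₁ a σ t η - (ξ₀ : ℂ) := by ring
      rw [h2] at h1
      refine h1.trans ?_
      rw [etaS_sub₀ ξ₀ ξ₁ a σ t η h1q, norm_div, norm_mul]
      have h3 : ‖((ξ₁ : ℂ) - (ξ₀ : ℂ))‖ = ξ₁ - ξ₀ := by
        rw [← Complex.ofReal_sub, Complex.norm_real, Real.norm_eq_abs, abs_of_pos hΔ]
      rw [h3]
    have hlip := exp_sq_lipschitz α hα ‖etaS ξ₀ ξ₁ a σ t η - (ξ : ℂ)‖ (abs (ξ₀ - ξ))
    rw [sq_abs] at hlip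
    have hl : |Real.exp (-(‖etaS ξ₀ ξ₁ a σ t η - (ξ : ℂ)‖ ^ 2 / α)) -
        Real.exp (-((ξ₀ - ξ) ^ 2 / α))| ≤ 2 / Real.sqrt α *
          ((ξ₁ - ξ₀) * ‖qFac ξ₀ ξ₁ a σ t η‖ / ‖1 + qFac ξ₀ ξ₁ a σ t η‖) :=
      hlip.trans (mul_le_mul_of_nonneg_left hxy (by positivity))
    have hest := Stmt17Aux2.estA_abs α (ξ₁ - ξ₀) a
      (Real.exp (2 * Real.pi ^ 2 * σ ^ 2 * (ξ₁ - ξ₀) * (η - (ξ₀ + ξ₁) / 2)))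
      (Real.exp (-(‖etaS ξ₀ ξ₁ a σ t η - (ξ : ℂ)‖ ^ 2 / α)))
      (Real.exp (-((ξ₀ - ξ) ^ 2 / α)))
      hα hΔ ha hEpos (Real.exp_pos _).le (exp_neg_le_one _ (by positivity))
      (Real.exp_pos _).le hs0le (qFac ξ₀ ξ₁ a σ t η) hqn h1q hl
    calc Real.exp (-(Real.pi ^ 2 * σ ^ 2 * (η - ξ₀) ^ 2)) *
          ‖(1 + qFac ξ₀ ξ₁ a σ t η) *
              ((Real.exp (-(‖etaS ξ₀ ξ₁ a σ t η - (ξ : ℂ)‖ ^ 2 / α)) : ℝ) : ℂ) -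
            ((Real.exp (-((ξ₀ - ξ) ^ 2 / α)) : ℝ) : ℂ)‖
        ≤ Real.exp (-(Real.pi ^ 2 * σ ^ 2 * (η - ξ₀) ^ 2)) *
            (a * (5 + 6 * (ξ₁ - ξ₀) / Real.sqrt α) *
              Real.exp (2 * Real.pi ^ 2 * σ ^ 2 * (ξ₁ - ξ₀) * (η - (ξ₀ + ξ₁) / 2))) :=
          mul_le_mul_of_nonneg_left hest he0pos.le
      _ = a * (5 + 6 * (ξ₁ - ξ₀) / Real.sqrt α) *
            (Real.exp (-(Real.pi ^ 2 * σ ^ 2 * (η - ξ₀) ^ 2)) *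
              Real.exp (2 * Real.pi ^ 2 * σ ^ 2 * (ξ₁ - ξ₀) * (η - (ξ₀ + ξ₁) / 2))) := by ring
      _ = a * (5 + 6 * (ξ₁ - ξ₀) / Real.sqrt α) *
            Real.exp (-(Real.pi ^ 2 * σ ^ 2 * (η - ξ₁) ^ 2)) := by rw [hid]

/-- Pointwise estimate for part (ii). -/
lemma keyB (ξ₀ ξ₁ σ α : ℝ) (hξ : ξ₀ < ξ₁) (hα : 0 < α)
    (a : ℝ) (ha : 0 < a) (t ξ η : ℝ) :
    ‖(a : ℂ)⁻¹ * (if Vst ξ₀ ξ₁ a σ t η = 0 then (0 : ℂ) else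
        Vst ξ₀ ξ₁ a σ t η *
          ((Real.exp (-(‖etaS ξ₀ ξ₁ a σ t η - (ξ : ℂ)‖ ^ 2 / α)) : ℝ) : ℂ)) -
      Complex.exp (2 * Real.pi * Complex.I * ξ₁ * t) *
        ((Real.exp (-(Real.pi ^ 2 * σ ^ 2 * (η - ξ₁) ^ 2)) : ℝ) : ℂ) *
        ((Real.exp (-((ξ₁ - ξ) ^ 2 / α)) : ℝ) : ℂ)‖ ≤
    a⁻¹ * (5 + 6 * (ξ₁ - ξ₀) / Real.sqrt α) *
      Real.exp (-(Real.pi ^ 2 * σ ^ 2 * (η - ξ₀) ^ 2)) := by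
  have hΔ : 0 < ξ₁ - ξ₀ := sub_pos.mpr hξ
  have hsα : 0 < Real.sqrt α := Real.sqrt_pos.mpr hα
  have he0pos : 0 < Real.exp (-(Real.pi ^ 2 * σ ^ 2 * (η - ξ₀) ^ 2)) := Real.exp_pos _
  have he1pos : 0 < Real.exp (-(Real.pi ^ 2 * σ ^ 2 * (η - ξ₁) ^ 2)) := Real.exp_pos _
  have hEpos : 0 < Real.exp (2 * Real.pi ^ 2 * σ ^ 2 * (ξ₁ - ξ₀) * (η - (ξ₀ + ξ₁) / 2)) :=
    Real.exp_pos _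
  have hqn := norm_qFac ξ₀ ξ₁ σ a ha.le t η
  have hid := (exp_arg_id ξ₀ ξ₁ σ η).symm
  have hM06 : 0 ≤ 6 * (ξ₁ - ξ₀) / Real.sqrt α := div_nonneg (by linarith) hsα.le
  have hs1le : Real.exp (-((ξ₁ - ξ) ^ 2 / α)) ≤ 1 := exp_neg_le_one _ (by positivity)
  by_cases hV0 : Vst ξ₀ ξ₁ a σ t η = 0
  · rw [if_pos hV0, mul_zero, zero_sub, norm_neg]
    have h1q : 1 + qFac ξ₀ ξ₁ a σ t η = 0 := (Vst_eq_zero_iff ξ₀ ξ₁ a σ t η).mp hV0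
    have hq1 : ‖qFac ξ₀ ξ₁ a σ t η‖ = 1 := by
      have hq : qFac ξ₀ ξ₁ a σ t η = -1 := by linear_combination h1q
      rw [hq, norm_neg, norm_one]
    have haE : a * Real.exp (2 * Real.pi ^ 2 * σ ^ 2 * (ξ₁ - ξ₀) * (η - (ξ₀ + ξ₁) / 2)) = 1 :=
      hqn.symm.trans hq1
    have hEa : Real.exp (2 * Real.pi ^ 2 * σ ^ 2 * (ξ₁ - ξ₀) * (η - (ξ₀ + ξ₁) / 2)) = a⁻¹ := by
      rw [inv_eq_one_div, eq_div_iff ha.ne']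
      linear_combination haE
    rw [norm_mul, norm_mul, norm_expI, one_mul, Complex.norm_real, Complex.norm_real,
      Real.norm_eq_abs, Real.norm_eq_abs, abs_of_pos he1pos, abs_of_pos (Real.exp_pos _)]
    have he1e0 : Real.exp (-(Real.pi ^ 2 * σ ^ 2 * (η - ξ₁) ^ 2)) =
        a⁻¹ * Real.exp (-(Real.pi ^ 2 * σ ^ 2 * (η - ξ₀) ^ 2)) := by
      rw [← hid, hEa]; ring
    calc Real.exp (-(Real.pi ^ 2 * σ ^ 2 * (η - ξ₁) ^ 2)) * Real.exp (-((ξ₁ - ξ) ^ 2 / α))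
        ≤ Real.exp (-(Real.pi ^ 2 * σ ^ 2 * (η - ξ₁) ^ 2)) * 1 :=
          mul_le_mul_of_nonneg_left hs1le he1pos.le
      _ = a⁻¹ * Real.exp (-(Real.pi ^ 2 * σ ^ 2 * (η - ξ₀) ^ 2)) := by rw [mul_one, he1e0]
      _ ≤ a⁻¹ * (5 + 6 * (ξ₁ - ξ₀) / Real.sqrt α) *
            Real.exp (-(Real.pi ^ 2 * σ ^ 2 * (η - ξ₀) ^ 2)) := by
          nlinarith [mul_pos (inv_pos.mpr ha) he0pos,
            mul_nonneg (mul_pos (inv_pos.mpr ha) he0pos).le hM06]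
  · have h1q : 1 + qFac ξ₀ ξ₁ a σ t η ≠ 0 :=
      fun h => hV0 ((Vst_eq_zero_iff ξ₀ ξ₁ a σ t η).mpr h)
    rw [if_neg hV0, Vst_eq, ← hid]
    have hdn : 0 < ‖1 + qFac ξ₀ ξ₁ a σ t η‖ := norm_pos_iff.mpr h1q
    have hxy : abs (‖etaS ξ₀ ξ₁ a σ t η - (ξ : ℂ)‖ - abs (ξ₁ - ξ)) ≤
        (ξ₁ - ξ₀) / ‖1 + qFac ξ₀ ξ₁ a σ t η‖ := by
      have hy' : abs (ξ₁ - ξ) = ‖((ξ₁ : ℂ) - (ξ : ℂ))‖ := by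
        rw [← Complex.ofReal_sub, Complex.norm_real, Real.norm_eq_abs]
      rw [hy']
      have h1 := abs_norm_sub_norm_le (etaS ξ₀ ξ₁ a σ t η - (ξ : ℂ)) ((ξ₁ : ℂ) - (ξ : ℂ))
      have h2 : etaS ξ₀ ξ₁ a σ t η - (ξ : ℂ) - ((ξ₁ : ℂ) - (ξ : ℂ)) =
          etaS ξ₀ ξ₁ a σ t η - (ξ₁ : ℂ) := by ring
      rw [h2] at h1
      refine h1.trans ?_
      rw [etaS_sub₁ ξ₀ ξ₁ a σ t η h1q, norm_div, norm_neg]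
      have h3 : ‖((ξ₁ : ℂ) - (ξ₀ : ℂ))‖ = ξ₁ - ξ₀ := by
        rw [← Complex.ofReal_sub, Complex.norm_real, Real.norm_eq_abs, abs_of_pos hΔ]
      rw [h3]
    have hlip := exp_sq_lipschitz α hα ‖etaS ξ₀ ξ₁ a σ t η - (ξ : ℂ)‖ (abs (ξ₁ - ξ))
    rw [sq_abs] at hlip
    have hl : |Real.exp (-(‖etaS ξ₀ ξ₁ a σ t η - (ξ : ℂ)‖ ^ 2 / α)) -
        Real.exp (-((ξ₁ - ξ) ^ 2 / α))| ≤ 2 / Real.sqrt α *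
          ((ξ₁ - ξ₀) / ‖1 + qFac ξ₀ ξ₁ a σ t η‖) :=
      hlip.trans (mul_le_mul_of_nonneg_left hxy (by positivity))
    have hrel : Complex.exp (2 * Real.pi * Complex.I * ξ₀ * t) * qFac ξ₀ ξ₁ a σ t η =
        ((a : ℝ) : ℂ) * Complex.exp (2 * Real.pi * Complex.I * ξ₁ * t) *
          ((Real.exp (2 * Real.pi ^ 2 * σ ^ 2 * (ξ₁ - ξ₀) * (η - (ξ₀ + ξ₁) / 2)) : ℝ) : ℂ) := by
      unfold qFac
      rw [← expI_mul ξ₀ ξ₁ t]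
      ring
    have hP0 := norm_expI ξ₀ t
    have hP1 := norm_expI ξ₁ t
    have hcast : ((Real.exp (-(Real.pi ^ 2 * σ ^ 2 * (η - ξ₀) ^ 2)) *
        Real.exp (2 * Real.pi ^ 2 * σ ^ 2 * (ξ₁ - ξ₀) * (η - (ξ₀ + ξ₁) / 2)) : ℝ) : ℂ) =
        ((Real.exp (-(Real.pi ^ 2 * σ ^ 2 * (η - ξ₀) ^ 2)) : ℝ) : ℂ) *
        ((Real.exp (2 * Real.pi ^ 2 * σ ^ 2 * (ξ₁ - ξ₀) * (η - (ξ₀ + ξ₁) / 2)) : ℝ) : ℂ) := by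
      push_cast; ring
    exact Stmt17Aux2.estB_abs α (ξ₁ - ξ₀) a
      (Real.exp (2 * Real.pi ^ 2 * σ ^ 2 * (ξ₁ - ξ₀) * (η - (ξ₀ + ξ₁) / 2)))
      (Real.exp (-(Real.pi ^ 2 * σ ^ 2 * (η - ξ₀) ^ 2)))
      (Real.exp (-(‖etaS ξ₀ ξ₁ a σ t η - (ξ : ℂ)‖ ^ 2 / α)))
      (Real.exp (-((ξ₁ - ξ) ^ 2 / α)))
      hα hΔ ha hEpos he0pos (Real.exp_pos _).le (exp_neg_le_one _ (by positivity))
      (Real.exp_pos _).le hs1le (qFac ξ₀ ξ₁ a σ t η)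
      (Complex.exp (2 * Real.pi * Complex.I * ξ₀ * t))
      (Complex.exp (2 * Real.pi * Complex.I * ξ₁ * t))
      hqn hP0 hP1 hrel h1q hl

end Stmt17Aux

namespace Stmt17Aux

lemma meas_integrand (ξ₀ ξ₁ a σ α t ξ : ℝ) :
    Measurable (fun η : ℝ => if Vst ξ₀ ξ₁ a σ t η = 0 then (0 : ℂ) else
      Vst ξ₀ ξ₁ a σ t η *
        ((Real.exp (-(‖etaS ξ₀ ξ₁ a σ t η - (ξ : ℂ)‖ ^ 2 / α)) : ℝ) : ℂ)) := by
  have hV : Continuous fun η : ℝ => Vst ξ₀ ξ₁ a σ t η := by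
    unfold Vst; fun_prop
  have hq : Continuous fun η : ℝ => qFac ξ₀ ξ₁ a σ t η := by
    unfold qFac; fun_prop
  have hetaS : Measurable fun η : ℝ => etaS ξ₀ ξ₁ a σ t η := by
    unfold etaS
    simp only [div_eq_mul_inv]
    exact Measurable.mul (by fun_prop) (measurable_inv.comp (by fun_prop))
  have hg : Measurable fun η : ℝ => Vst ξ₀ ξ₁ a σ t η *
      ((Real.exp (-(‖etaS ξ₀ ξ₁ a σ t η - (ξ : ℂ)‖ ^ 2 / α)) : ℝ) : ℂ) := by
    apply hV.measurable.mul
    apply Complex.measurable_ofReal.comp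
    apply Real.measurable_exp.comp
    apply Measurable.neg
    apply Measurable.div_const
    exact (hetaS.sub measurable_const).norm.pow_const 2
  exact Measurable.ite (hV.measurable (measurableSet_singleton 0)) measurable_const hg

end Stmt17Aux

open Stmt17Aux

/-- for fixed `σ, α, ξ₀ < ξ₁`: (i) `|S_V − S₀| ≤ C·a` uniformly in `(t,ξ)`
for all sufficiently small `a > 0`; (ii) `|a⁻¹S_V − a⁻¹S₁| ≤ C′/a` uniformly in `(t,ξ)`
for all sufficiently large `a`. -/
theorem stmt17 (ξ₀ ξ₁ σ α : ℝ) (hξ : ξ₀ < ξ₁) (hσ : 0 < σ) (hα : 0 < α) :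
    (∃ C > (0 : ℝ), ∃ a₀ > (0 : ℝ), ∀ a : ℝ, 0 < a → a ≤ a₀ → ∀ t ξ : ℝ,
      ‖SV ξ₀ ξ₁ a σ α t ξ - Ssingle ξ₀ σ α t ξ‖ ≤ C * a) ∧
    (∃ C' > (0 : ℝ), ∃ a₁ > (0 : ℝ), ∀ a : ℝ, a₁ ≤ a → ∀ t ξ : ℝ,
      ‖(a : ℂ)⁻¹ * SV ξ₀ ξ₁ a σ α t ξ - (a : ℂ)⁻¹ * ((a : ℂ) * Ssingle ξ₁ σ α t ξ)‖ ≤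
        C' / a) := by
  have hπ := Real.pi_pos
  have hb : (0 : ℝ) < Real.pi ^ 2 * σ ^ 2 := by positivity
  have hsα : 0 < Real.sqrt α := Real.sqrt_pos.mpr hα
  have hΔ : 0 < ξ₁ - ξ₀ := sub_pos.mpr hξ
  have hM06 : 0 ≤ 6 * (ξ₁ - ξ₀) / Real.sqrt α := div_nonneg (by linarith) hsα.le
  have hM0 : 0 < 5 + 6 * (ξ₁ - ξ₀) / Real.sqrt α := by linarith
  have hJ0 : 0 < Real.sqrt (Real.pi / (Real.pi ^ 2 * σ ^ 2)) :=
    Real.sqrt_pos.mpr (by positivity)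
  have hsπα : 0 < Real.sqrt (Real.pi * α) := Real.sqrt_pos.mpr (by positivity)
  have hnorminv : ‖((Real.sqrt (Real.pi * α) : ℝ) : ℂ)⁻¹‖ = (Real.sqrt (Real.pi * α))⁻¹ := by
    rw [norm_inv, Complex.norm_real, Real.norm_eq_abs, abs_of_pos hsπα]
  -- the scalar identity relating the normalizations
  have hscal : (Real.pi * σ * Real.sqrt α)⁻¹ =
      (Real.sqrt (Real.pi * α))⁻¹ * Real.sqrt (Real.pi / (Real.pi ^ 2 * σ ^ 2)) := by
    have h1 : Real.sqrt (Real.pi / (Real.pi ^ 2 * σ ^ 2)) =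
        Real.sqrt Real.pi / (Real.pi * σ) := by
      rw [Real.sqrt_div hπ.le, show Real.pi ^ 2 * σ ^ 2 = (Real.pi * σ) ^ 2 by ring,
        Real.sqrt_sq (by positivity)]
    have h2 : Real.sqrt (Real.pi * α) = Real.sqrt Real.pi * Real.sqrt α :=
      Real.sqrt_mul hπ.le α
    have hππ : Real.sqrt Real.pi * Real.sqrt Real.pi = Real.pi :=
      Real.mul_self_sqrt hπ.le
    have hsπ : 0 < Real.sqrt Real.pi := Real.sqrt_pos.mpr hπ
    rw [h1, h2]
    field_simp
  constructor
  · -- part (i)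
    refine ⟨(Real.sqrt (Real.pi * α))⁻¹ * (5 + 6 * (ξ₁ - ξ₀) / Real.sqrt α) *
      Real.sqrt (Real.pi / (Real.pi ^ 2 * σ ^ 2)), by positivity, 1, one_pos, ?_⟩
    intro a ha _ t ξ
    have hFi : Integrable (fun η : ℝ => if Vst ξ₀ ξ₁ a σ t η = 0 then (0 : ℂ) else
        Vst ξ₀ ξ₁ a σ t η *
          ((Real.exp (-(‖etaS ξ₀ ξ₁ a σ t η - (ξ : ℂ)‖ ^ 2 / α)) : ℝ) : ℂ)) := by
      apply Integrable.mono'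
        (((gauss_integrable (Real.pi ^ 2 * σ ^ 2) ξ₁ hb).const_mul
          (a * (5 + 6 * (ξ₁ - ξ₀) / Real.sqrt α))).add
          (gauss_integrable (Real.pi ^ 2 * σ ^ 2) ξ₀ hb))
        (meas_integrand ξ₀ ξ₁ a σ α t ξ).aestronglyMeasurable
      refine Filter.Eventually.of_forall fun η => ?_
      have hkey := keyA ξ₀ ξ₁ σ α hξ hα a ha t ξ η
      have hGnorm : ‖Complex.exp (2 * Real.pi * Complex.I * ξ₀ * t) *
          ((Real.exp (-(Real.pi ^ 2 * σ ^ 2 * (η - ξ₀) ^ 2)) : ℝ) : ℂ) *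
          ((Real.exp (-((ξ₀ - ξ) ^ 2 / α)) : ℝ) : ℂ)‖ ≤
          Real.exp (-(Real.pi ^ 2 * σ ^ 2 * (η - ξ₀) ^ 2)) := by
        rw [norm_mul, norm_mul, norm_expI, one_mul, Complex.norm_real, Complex.norm_real,
          Real.norm_eq_abs, Real.norm_eq_abs, abs_of_pos (Real.exp_pos _),
          abs_of_pos (Real.exp_pos _)]
        have := exp_neg_le_one ((ξ₀ - ξ) ^ 2 / α) (by positivity)
        nlinarith [Real.exp_pos (-(Real.pi ^ 2 * σ ^ 2 * (η - ξ₀) ^ 2)),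
          Real.exp_pos (-((ξ₀ - ξ) ^ 2 / α))]
      calc ‖if Vst ξ₀ ξ₁ a σ t η = 0 then (0 : ℂ) else
            Vst ξ₀ ξ₁ a σ t η *
              ((Real.exp (-(‖etaS ξ₀ ξ₁ a σ t η - (ξ : ℂ)‖ ^ 2 / α)) : ℝ) : ℂ)‖
          ≤ ‖(if Vst ξ₀ ξ₁ a σ t η = 0 then (0 : ℂ) else
              Vst ξ₀ ξ₁ a σ t η *
                ((Real.exp (-(‖etaS ξ₀ ξ₁ a σ t η - (ξ : ℂ)‖ ^ 2 / α)) : ℝ) : ℂ)) -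
              Complex.exp (2 * Real.pi * Complex.I * ξ₀ * t) *
                ((Real.exp (-(Real.pi ^ 2 * σ ^ 2 * (η - ξ₀) ^ 2)) : ℝ) : ℂ) *
                ((Real.exp (-((ξ₀ - ξ) ^ 2 / α)) : ℝ) : ℂ)‖ +
            ‖Complex.exp (2 * Real.pi * Complex.I * ξ₀ * t) *
              ((Real.exp (-(Real.pi ^ 2 * σ ^ 2 * (η - ξ₀) ^ 2)) : ℝ) : ℂ) *
              ((Real.exp (-((ξ₀ - ξ) ^ 2 / α)) : ℝ) : ℂ)‖ := norm_le_norm_sub_add' _ _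
        _ ≤ a * (5 + 6 * (ξ₁ - ξ₀) / Real.sqrt α) *
              Real.exp (-(Real.pi ^ 2 * σ ^ 2 * (η - ξ₁) ^ 2)) +
            Real.exp (-(Real.pi ^ 2 * σ ^ 2 * (η - ξ₀) ^ 2)) := add_le_add hkey hGnorm
    have hGi : Integrable (fun η : ℝ =>
        Complex.exp (2 * Real.pi * Complex.I * ξ₀ * t) *
          ((Real.exp (-(Real.pi ^ 2 * σ ^ 2 * (η - ξ₀) ^ 2)) : ℝ) : ℂ) *
          ((Real.exp (-((ξ₀ - ξ) ^ 2 / α)) : ℝ) : ℂ)) := by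
      have h1 := ((gauss_integrable (Real.pi ^ 2 * σ ^ 2) ξ₀ hb).ofReal.const_mul
        (Complex.exp (2 * Real.pi * Complex.I * ξ₀ * t) *
          ((Real.exp (-((ξ₀ - ξ) ^ 2 / α)) : ℝ) : ℂ)))
      refine h1.congr (Filter.Eventually.of_forall fun η => ?_)
      exact mul_right_comm _ _ _
    have hGval : (∫ η : ℝ, Complex.exp (2 * Real.pi * Complex.I * ξ₀ * t) *
          ((Real.exp (-(Real.pi ^ 2 * σ ^ 2 * (η - ξ₀) ^ 2)) : ℝ) : ℂ) *
          ((Real.exp (-((ξ₀ - ξ) ^ 2 / α)) : ℝ) : ℂ)) =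
        (Complex.exp (2 * Real.pi * Complex.I * ξ₀ * t) *
          ((Real.exp (-((ξ₀ - ξ) ^ 2 / α)) : ℝ) : ℂ)) *
          ((Real.sqrt (Real.pi / (Real.pi ^ 2 * σ ^ 2)) : ℝ) : ℂ) := by
      have h1 : (fun η : ℝ => Complex.exp (2 * Real.pi * Complex.I * ξ₀ * t) *
          ((Real.exp (-(Real.pi ^ 2 * σ ^ 2 * (η - ξ₀) ^ 2)) : ℝ) : ℂ) *
          ((Real.exp (-((ξ₀ - ξ) ^ 2 / α)) : ℝ) : ℂ)) =
          (fun η : ℝ => (Complex.exp (2 * Real.pi * Complex.I * ξ₀ * t) *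
            ((Real.exp (-((ξ₀ - ξ) ^ 2 / α)) : ℝ) : ℂ)) *
            ((Real.exp (-(Real.pi ^ 2 * σ ^ 2 * (η - ξ₀) ^ 2)) : ℝ) : ℂ)) := by
        funext η; ring
      have h2 : (∫ η : ℝ, ((Real.exp (-(Real.pi ^ 2 * σ ^ 2 * (η - ξ₀) ^ 2)) : ℝ) : ℂ)) =
          (((∫ η : ℝ, Real.exp (-(Real.pi ^ 2 * σ ^ 2 * (η - ξ₀) ^ 2)) : ℝ)) : ℂ) :=
        integral_ofReal
      rw [h1, integral_const_mul, h2, gauss_integral (Real.pi ^ 2 * σ ^ 2) ξ₀ hb]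
    have hSs : Ssingle ξ₀ σ α t ξ =
        ((Real.sqrt (Real.pi * α) : ℝ) : ℂ)⁻¹ *
          ∫ η : ℝ, Complex.exp (2 * Real.pi * Complex.I * ξ₀ * t) *
            ((Real.exp (-(Real.pi ^ 2 * σ ^ 2 * (η - ξ₀) ^ 2)) : ℝ) : ℂ) *
            ((Real.exp (-((ξ₀ - ξ) ^ 2 / α)) : ℝ) : ℂ) := by
      rw [hGval]
      unfold Ssingle
      rw [show ((Real.pi * σ * Real.sqrt α : ℝ) : ℂ)⁻¹ =
        (((Real.pi * σ * Real.sqrt α)⁻¹ : ℝ) : ℂ) from (Complex.ofReal_inv _).symm, hscal]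
      push_cast
      ring
    rw [hSs]
    unfold SV
    rw [← mul_sub, norm_mul, hnorminv,
      ← integral_sub hFi hGi]
    have hbd : ‖∫ η : ℝ, ((if Vst ξ₀ ξ₁ a σ t η = 0 then (0 : ℂ) else
        Vst ξ₀ ξ₁ a σ t η *
          ((Real.exp (-(‖etaS ξ₀ ξ₁ a σ t η - (ξ : ℂ)‖ ^ 2 / α)) : ℝ) : ℂ)) -
        Complex.exp (2 * Real.pi * Complex.I * ξ₀ * t) *
          ((Real.exp (-(Real.pi ^ 2 * σ ^ 2 * (η - ξ₀) ^ 2)) : ℝ) : ℂ) *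
          ((Real.exp (-((ξ₀ - ξ) ^ 2 / α)) : ℝ) : ℂ))‖ ≤
        ∫ η : ℝ, a * (5 + 6 * (ξ₁ - ξ₀) / Real.sqrt α) *
          Real.exp (-(Real.pi ^ 2 * σ ^ 2 * (η - ξ₁) ^ 2)) := by
      apply norm_integral_le_of_norm_le
        ((gauss_integrable (Real.pi ^ 2 * σ ^ 2) ξ₁ hb).const_mul _)
      exact Filter.Eventually.of_forall fun η => keyA ξ₀ ξ₁ σ α hξ hα a ha t ξ η
    rw [integral_const_mul, gauss_integral (Real.pi ^ 2 * σ ^ 2) ξ₁ hb] at hbd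
    calc (Real.sqrt (Real.pi * α))⁻¹ * ‖∫ η : ℝ, _‖
        ≤ (Real.sqrt (Real.pi * α))⁻¹ *
          (a * (5 + 6 * (ξ₁ - ξ₀) / Real.sqrt α) *
            Real.sqrt (Real.pi / (Real.pi ^ 2 * σ ^ 2))) :=
          mul_le_mul_of_nonneg_left hbd (by positivity)
      _ = (Real.sqrt (Real.pi * α))⁻¹ * (5 + 6 * (ξ₁ - ξ₀) / Real.sqrt α) *
            Real.sqrt (Real.pi / (Real.pi ^ 2 * σ ^ 2)) * a := by ring
  · -- part (ii)
    refine ⟨(Real.sqrt (Real.pi * α))⁻¹ * (5 + 6 * (ξ₁ - ξ₀) / Real.sqrt α) *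
      Real.sqrt (Real.pi / (Real.pi ^ 2 * σ ^ 2)), by positivity, 1, one_pos, ?_⟩
    intro a ha1 t ξ
    have ha : (0 : ℝ) < a := lt_of_lt_of_le one_pos ha1
    have hane : ((a : ℝ) : ℂ) ≠ 0 := by exact_mod_cast ha.ne'
    rw [← mul_assoc, inv_mul_cancel₀ hane, one_mul]
    have hFi : Integrable (fun η : ℝ => if Vst ξ₀ ξ₁ a σ t η = 0 then (0 : ℂ) else
        Vst ξ₀ ξ₁ a σ t η *
          ((Real.exp (-(‖etaS ξ₀ ξ₁ a σ t η - (ξ : ℂ)‖ ^ 2 / α)) : ℝ) : ℂ)) := by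
      apply Integrable.mono'
        (((gauss_integrable (Real.pi ^ 2 * σ ^ 2) ξ₁ hb).const_mul
          (a * (5 + 6 * (ξ₁ - ξ₀) / Real.sqrt α))).add
          (gauss_integrable (Real.pi ^ 2 * σ ^ 2) ξ₀ hb))
        (meas_integrand ξ₀ ξ₁ a σ α t ξ).aestronglyMeasurable
      refine Filter.Eventually.of_forall fun η => ?_
      have hkey := keyA ξ₀ ξ₁ σ α hξ hα a ha t ξ η
      have hGnorm : ‖Complex.exp (2 * Real.pi * Complex.I * ξ₀ * t) *
          ((Real.exp (-(Real.pi ^ 2 * σ ^ 2 * (η - ξ₀) ^ 2)) : ℝ) : ℂ) *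
          ((Real.exp (-((ξ₀ - ξ) ^ 2 / α)) : ℝ) : ℂ)‖ ≤
          Real.exp (-(Real.pi ^ 2 * σ ^ 2 * (η - ξ₀) ^ 2)) := by
        rw [norm_mul, norm_mul, norm_expI, one_mul, Complex.norm_real, Complex.norm_real,
          Real.norm_eq_abs, Real.norm_eq_abs, abs_of_pos (Real.exp_pos _),
          abs_of_pos (Real.exp_pos _)]
        have := exp_neg_le_one ((ξ₀ - ξ) ^ 2 / α) (by positivity)
        nlinarith [Real.exp_pos (-(Real.pi ^ 2 * σ ^ 2 * (η - ξ₀) ^ 2)),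
          Real.exp_pos (-((ξ₀ - ξ) ^ 2 / α))]
      calc ‖if Vst ξ₀ ξ₁ a σ t η = 0 then (0 : ℂ) else
            Vst ξ₀ ξ₁ a σ t η *
              ((Real.exp (-(‖etaS ξ₀ ξ₁ a σ t η - (ξ : ℂ)‖ ^ 2 / α)) : ℝ) : ℂ)‖
          ≤ ‖(if Vst ξ₀ ξ₁ a σ t η = 0 then (0 : ℂ) else
              Vst ξ₀ ξ₁ a σ t η *
                ((Real.exp (-(‖etaS ξ₀ ξ₁ a σ t η - (ξ : ℂ)‖ ^ 2 / α)) : ℝ) : ℂ)) -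
              Complex.exp (2 * Real.pi * Complex.I * ξ₀ * t) *
                ((Real.exp (-(Real.pi ^ 2 * σ ^ 2 * (η - ξ₀) ^ 2)) : ℝ) : ℂ) *
                ((Real.exp (-((ξ₀ - ξ) ^ 2 / α)) : ℝ) : ℂ)‖ +
            ‖Complex.exp (2 * Real.pi * Complex.I * ξ₀ * t) *
              ((Real.exp (-(Real.pi ^ 2 * σ ^ 2 * (η - ξ₀) ^ 2)) : ℝ) : ℂ) *
              ((Real.exp (-((ξ₀ - ξ) ^ 2 / α)) : ℝ) : ℂ)‖ := norm_le_norm_sub_add' _ _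
        _ ≤ a * (5 + 6 * (ξ₁ - ξ₀) / Real.sqrt α) *
              Real.exp (-(Real.pi ^ 2 * σ ^ 2 * (η - ξ₁) ^ 2)) +
            Real.exp (-(Real.pi ^ 2 * σ ^ 2 * (η - ξ₀) ^ 2)) := add_le_add hkey hGnorm
    have hFi' : Integrable (fun η : ℝ => ((a : ℝ) : ℂ)⁻¹ *
        (if Vst ξ₀ ξ₁ a σ t η = 0 then (0 : ℂ) else
          Vst ξ₀ ξ₁ a σ t η *
            ((Real.exp (-(‖etaS ξ₀ ξ₁ a σ t η - (ξ : ℂ)‖ ^ 2 / α)) : ℝ) : ℂ))) :=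
      hFi.const_mul _
    have hGi : Integrable (fun η : ℝ =>
        Complex.exp (2 * Real.pi * Complex.I * ξ₁ * t) *
          ((Real.exp (-(Real.pi ^ 2 * σ ^ 2 * (η - ξ₁) ^ 2)) : ℝ) : ℂ) *
          ((Real.exp (-((ξ₁ - ξ) ^ 2 / α)) : ℝ) : ℂ)) := by
      have h1 := ((gauss_integrable (Real.pi ^ 2 * σ ^ 2) ξ₁ hb).ofReal.const_mul
        (Complex.exp (2 * Real.pi * Complex.I * ξ₁ * t) *
          ((Real.exp (-((ξ₁ - ξ) ^ 2 / α)) : ℝ) : ℂ)))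
      refine h1.congr (Filter.Eventually.of_forall fun η => ?_)
      exact mul_right_comm _ _ _
    have hGval : (∫ η : ℝ, Complex.exp (2 * Real.pi * Complex.I * ξ₁ * t) *
          ((Real.exp (-(Real.pi ^ 2 * σ ^ 2 * (η - ξ₁) ^ 2)) : ℝ) : ℂ) *
          ((Real.exp (-((ξ₁ - ξ) ^ 2 / α)) : ℝ) : ℂ)) =
        (Complex.exp (2 * Real.pi * Complex.I * ξ₁ * t) *
          ((Real.exp (-((ξ₁ - ξ) ^ 2 / α)) : ℝ) : ℂ)) *
          ((Real.sqrt (Real.pi / (Real.pi ^ 2 * σ ^ 2)) : ℝ) : ℂ) := by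
      have h1 : (fun η : ℝ => Complex.exp (2 * Real.pi * Complex.I * ξ₁ * t) *
          ((Real.exp (-(Real.pi ^ 2 * σ ^ 2 * (η - ξ₁) ^ 2)) : ℝ) : ℂ) *
          ((Real.exp (-((ξ₁ - ξ) ^ 2 / α)) : ℝ) : ℂ)) =
          (fun η : ℝ => (Complex.exp (2 * Real.pi * Complex.I * ξ₁ * t) *
            ((Real.exp (-((ξ₁ - ξ) ^ 2 / α)) : ℝ) : ℂ)) *
            ((Real.exp (-(Real.pi ^ 2 * σ ^ 2 * (η - ξ₁) ^ 2)) : ℝ) : ℂ)) := by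
        funext η; ring
      have h2 : (∫ η : ℝ, ((Real.exp (-(Real.pi ^ 2 * σ ^ 2 * (η - ξ₁) ^ 2)) : ℝ) : ℂ)) =
          (((∫ η : ℝ, Real.exp (-(Real.pi ^ 2 * σ ^ 2 * (η - ξ₁) ^ 2)) : ℝ)) : ℂ) :=
        integral_ofReal
      rw [h1, integral_const_mul, h2, gauss_integral (Real.pi ^ 2 * σ ^ 2) ξ₁ hb]
    have hSs : Ssingle ξ₁ σ α t ξ =
        ((Real.sqrt (Real.pi * α) : ℝ) : ℂ)⁻¹ *
          ∫ η : ℝ, Complex.exp (2 * Real.pi * Complex.I * ξ₁ * t) *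
            ((Real.exp (-(Real.pi ^ 2 * σ ^ 2 * (η - ξ₁) ^ 2)) : ℝ) : ℂ) *
            ((Real.exp (-((ξ₁ - ξ) ^ 2 / α)) : ℝ) : ℂ) := by
      rw [hGval]
      unfold Ssingle
      rw [show ((Real.pi * σ * Real.sqrt α : ℝ) : ℂ)⁻¹ =
        (((Real.pi * σ * Real.sqrt α)⁻¹ : ℝ) : ℂ) from (Complex.ofReal_inv _).symm, hscal]
      push_cast
      ring
    rw [hSs]
    unfold SV
    rw [← mul_assoc, mul_comm (((a : ℝ) : ℂ)⁻¹) _, mul_assoc, ← integral_const_mul,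
      ← mul_sub, norm_mul, hnorminv, ← integral_sub hFi' hGi]
    have hbd : ‖∫ η : ℝ, (((a : ℝ) : ℂ)⁻¹ *
        (if Vst ξ₀ ξ₁ a σ t η = 0 then (0 : ℂ) else
          Vst ξ₀ ξ₁ a σ t η *
            ((Real.exp (-(‖etaS ξ₀ ξ₁ a σ t η - (ξ : ℂ)‖ ^ 2 / α)) : ℝ) : ℂ)) -
        Complex.exp (2 * Real.pi * Complex.I * ξ₁ * t) *
          ((Real.exp (-(Real.pi ^ 2 * σ ^ 2 * (η - ξ₁) ^ 2)) : ℝ) : ℂ) *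
          ((Real.exp (-((ξ₁ - ξ) ^ 2 / α)) : ℝ) : ℂ))‖ ≤
        ∫ η : ℝ, a⁻¹ * (5 + 6 * (ξ₁ - ξ₀) / Real.sqrt α) *
          Real.exp (-(Real.pi ^ 2 * σ ^ 2 * (η - ξ₀) ^ 2)) := by
      apply norm_integral_le_of_norm_le
        ((gauss_integrable (Real.pi ^ 2 * σ ^ 2) ξ₀ hb).const_mul _)
      exact Filter.Eventually.of_forall fun η => keyB ξ₀ ξ₁ σ α hξ hα a ha t ξ η
    rw [integral_const_mul, gauss_integral (Real.pi ^ 2 * σ ^ 2) ξ₀ hb] at hbd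
    calc (Real.sqrt (Real.pi * α))⁻¹ * ‖∫ η : ℝ, _‖
        ≤ (Real.sqrt (Real.pi * α))⁻¹ *
          (a⁻¹ * (5 + 6 * (ξ₁ - ξ₀) / Real.sqrt α) *
            Real.sqrt (Real.pi / (Real.pi ^ 2 * σ ^ 2))) :=
          mul_le_mul_of_nonneg_left hbd (by positivity)
      _ = (Real.sqrt (Real.pi * α))⁻¹ * (5 + 6 * (ξ₁ - ξ₀) / Real.sqrt α) *
            Real.sqrt (Real.pi / (Real.pi ^ 2 * σ ^ 2)) / a := by
          rw [div_eq_mul_inv]; ring
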